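/- Noisy randomized Kaczmarz theorem: Let A be an m × n real matrix with full column rank and nonzero rows a₁, …, a_m, and suppose Ax = b. Let r ∈ ℝᵐ be an arbitrary noise vector. Define the noisy randomized Kaczmarz iterates by x*_{k} = x*_{k-1} + ((b_{i_k} + r_{i_k} - ⟨a_{i_k}, x*_{k-1}⟩)/‖a_{i_k}‖²) a_{i_k}, where the indices i_k are chosen independently with ℙ(i_k = i) = ‖a_i‖²/‖A‖_F². Then 𝔼‖x*_k - x‖ ≤ (1 - 1/R)^{k/2} ‖x₀ - x‖ + √R · γ, where R = ‖A⁻¹‖² ‖A‖_F² and γ = max_i |r_i|/‖a_i‖. -/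

import Mathlib

open Finset

/-- Euclidean norm on `Fin k → ℝ`. -/
noncomputable def euclNorm {k : ℕ} (v : Fin k → ℝ) : ℝ := Real.sqrt (∑ j, v j ^ 2)

/-- Standard inner product on `Fin k → ℝ`. -/
noncomputable def ip {k : ℕ} (v w : Fin k → ℝ) : ℝ := ∑ j, v j * w j

/-- Frobenius norm of a matrix. -/
noncomputable def frob {m n : ℕ} (A : Matrix (Fin m) (Fin n) ℝ) : ℝ :=
  Real.sqrt (∑ i, ∑ j, A i j ^ 2)

/-- `‖A⁻¹‖ = inf {M : M‖Az‖ ≥ ‖z‖ for all z}`. -/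
noncomputable def invNorm {m n : ℕ} (A : Matrix (Fin m) (Fin n) ℝ) : ℝ :=
  sInf {M : ℝ | ∀ z : Fin n → ℝ, euclNorm z ≤ M * euclNorm (A.mulVec z)}

/-- Kaczmarz iteration driven by a list of row indices (head = last step):
each step orthogonally projects onto the hyperplane `{z : ⟨a_i, z⟩ = c i}`. -/
noncomputable def kIter {m n : ℕ} (A : Matrix (Fin m) (Fin n) ℝ) (c : Fin m → ℝ)
    (x0 : Fin n → ℝ) : List (Fin m) → (Fin n → ℝ)
  | [] => x0
  | i :: l => kIter A c x0 l + ((c i - ip (A i) (kIter A c x0 l)) / euclNorm (A i) ^ 2) • A i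



lemma euclNorm_nonneg {k : ℕ} (v : Fin k → ℝ) : 0 ≤ euclNorm v := Real.sqrt_nonneg _

lemma euclNorm_sq {k : ℕ} (v : Fin k → ℝ) : euclNorm v ^ 2 = ∑ j, v j ^ 2 :=
  Real.sq_sqrt (Finset.sum_nonneg fun j _ => sq_nonneg _)

lemma euclNorm_sq_pos {k : ℕ} {v : Fin k → ℝ} (hv : v ≠ 0) : 0 < euclNorm v ^ 2 := by
  rw [euclNorm_sq]
  have : ∃ j, v j ≠ 0 := by
    by_contra h; push_neg at h; exact hv (funext h)
  obtain ⟨j, hj⟩ := this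
  exact Finset.sum_pos' (fun i _ => sq_nonneg _) ⟨j, Finset.mem_univ _, by positivity⟩

lemma euclNorm_eq_norm {k : ℕ} (v : Fin k → ℝ) :
    euclNorm v = ‖(WithLp.equiv 2 (Fin k → ℝ)).symm v‖ := by
  rw [EuclideanSpace.norm_eq, euclNorm]
  congr 1; apply Finset.sum_congr rfl; intro j _
  rw [Real.norm_eq_abs, sq_abs]; rfl

lemma expand_sq {k : ℕ} (u w : Fin k → ℝ) (t : ℝ) :
    euclNorm (u + t • w) ^ 2 = euclNorm u ^ 2 + 2 * t * ip w u + t ^ 2 * euclNorm w ^ 2 := by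
  simp only [euclNorm_sq, ip, Finset.mul_sum, ← Finset.sum_add_distrib]
  apply Finset.sum_congr rfl; intro j _
  simp only [Pi.add_apply, Pi.smul_apply, smul_eq_mul]; ring

lemma mulVec_row {m n : ℕ} (A : Matrix (Fin m) (Fin n) ℝ) (z : Fin n → ℝ) (i : Fin m) :
    A.mulVec z i = ip (A i) z := rfl

lemma euclNorm_mulVec_sq {m n : ℕ} (A : Matrix (Fin m) (Fin n) ℝ) (z : Fin n → ℝ) :
    euclNorm (A.mulVec z) ^ 2 = ∑ i, ip (A i) z ^ 2 := by
  rw [euclNorm_sq]; rfl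


lemma frob_sq {m n : ℕ} (A : Matrix (Fin m) (Fin n) ℝ) :
    frob A ^ 2 = ∑ i, euclNorm (A i) ^ 2 := by
  rw [frob, Real.sq_sqrt (by positivity)]
  exact Finset.sum_congr rfl fun i _ => (euclNorm_sq (A i)).symm

lemma ip_cs {k : ℕ} (v w : Fin k → ℝ) : ip v w ^ 2 ≤ euclNorm v ^ 2 * euclNorm w ^ 2 := by
  simp only [euclNorm_sq, ip]
  exact Finset.sum_mul_sq_le_sq_mul_sq _ _ _

lemma exists_bound {m n : ℕ} (A : Matrix (Fin m) (Fin n) ℝ) (hrank : A.rank = n) :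
    ∃ M : ℝ, 0 ≤ M ∧ ∀ z : Fin n → ℝ, euclNorm z ≤ M * euclNorm (A.mulVec z) := by
  have hinj : Function.Injective A.mulVecLin := by
    rw [← LinearMap.ker_eq_bot]
    have h1 := A.mulVecLin.finrank_range_add_finrank_ker
    rw [Matrix.rank] at hrank
    rw [hrank] at h1
    simp only [Module.finrank_fintype_fun_eq_card, Fintype.card_fin] at h1
    have : Module.finrank ℝ (LinearMap.ker A.mulVecLin) = 0 := by omega
    exact Submodule.finrank_eq_zero.mp this
  let T : EuclideanSpace ℝ (Fin n) →ₗ[ℝ] EuclideanSpace ℝ (Fin m) :=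
    (WithLp.linearEquiv 2 ℝ (Fin m → ℝ)).symm.toLinearMap ∘ₗ A.mulVecLin ∘ₗ
      (WithLp.linearEquiv 2 ℝ (Fin n → ℝ)).toLinearMap
  have hTinj : Function.Injective T :=
    (WithLp.linearEquiv 2 ℝ (Fin m → ℝ)).symm.injective.comp
      (hinj.comp (WithLp.linearEquiv 2 ℝ (Fin n → ℝ)).injective)
  let e : EuclideanSpace ℝ (Fin n) ≃ₗ[ℝ] LinearMap.range T := LinearEquiv.ofInjective T hTinj
  let ec := e.toContinuousLinearEquiv
  set C := ‖(ec.symm : LinearMap.range T →L[ℝ] EuclideanSpace ℝ (Fin n))‖ with hC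
  refine ⟨C, hC ▸ (norm_nonneg (ec.symm : LinearMap.range T →L[ℝ] EuclideanSpace ℝ (Fin n))), fun z => ?_⟩
  have key : ‖(WithLp.equiv 2 (Fin n → ℝ)).symm z‖ ≤
      C * ‖(WithLp.equiv 2 (Fin m → ℝ)).symm (A.mulVec z)‖ := by
    set zE : EuclideanSpace ℝ (Fin n) := (WithLp.equiv 2 (Fin n → ℝ)).symm z
    have h1 : zE = ec.symm (ec zE) := (ec.symm_apply_apply zE).symm
    have h2 : ‖zE‖ ≤ C * ‖ec zE‖ := by
      conv_lhs => rw [h1]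
      exact (ec.symm : LinearMap.range T →L[ℝ] EuclideanSpace ℝ (Fin n)).le_opNorm _
    have h3 : ‖ec zE‖ = ‖(WithLp.equiv 2 (Fin m → ℝ)).symm (A.mulVec z)‖ := by
      have : (ec zE : EuclideanSpace ℝ (Fin m)) = T zE := rfl
      rw [show ‖ec zE‖ = ‖(ec zE : EuclideanSpace ℝ (Fin m))‖ from rfl, this]
      rfl
    rw [← h3]; exact h2
  rw [euclNorm_eq_norm, euclNorm_eq_norm]; exact key


lemma mulVec_inj {m n : ℕ} (A : Matrix (Fin m) (Fin n) ℝ) (hrank : A.rank = n)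
    {z : Fin n → ℝ} (hz : z ≠ 0) : A.mulVec z ≠ 0 := by
  have hinj : Function.Injective A.mulVecLin := by
    rw [← LinearMap.ker_eq_bot]
    have h1 := A.mulVecLin.finrank_range_add_finrank_ker
    rw [Matrix.rank] at hrank
    rw [hrank] at h1
    simp only [Module.finrank_fintype_fun_eq_card, Fintype.card_fin] at h1
    have : Module.finrank ℝ (LinearMap.ker A.mulVecLin) = 0 := by omega
    exact Submodule.finrank_eq_zero.mp this
  intro h
  exact hz (hinj (by simpa using h))

lemma euclNorm_single {k : ℕ} (i : Fin k) : euclNorm (Pi.single i (1:ℝ)) = 1 := by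
  have h : euclNorm (Pi.single i (1:ℝ)) ^ 2 = 1 := by
    rw [euclNorm_sq]
    simp [Pi.single_apply, ite_pow]
  have h2 := euclNorm_nonneg (Pi.single i (1:ℝ))
  nlinarith

lemma invNorm_lower {m n : ℕ} (A : Matrix (Fin m) (Fin n) ℝ) (hn : 0 < n)
    (hrank : A.rank = n) {M : ℝ}
    (hM : ∀ z : Fin n → ℝ, euclNorm z ≤ M * euclNorm (A.mulVec z)) :
    0 < M := by
  set z : Fin n → ℝ := Pi.single ⟨0, hn⟩ 1 with hz
  have hz0 : z ≠ 0 := by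
    intro h
    have := congrFun h ⟨0, hn⟩
    simp [hz] at this
  have h1 : (1:ℝ) ≤ M * euclNorm (A.mulVec z) := by
    have := hM z; rwa [euclNorm_single] at this
  have h2 : 0 < euclNorm (A.mulVec z) := by
    have := euclNorm_sq_pos (mulVec_inj A hrank hz0)
    nlinarith [euclNorm_nonneg (A.mulVec z)]
  nlinarith

lemma invNorm_spec {m n : ℕ} (A : Matrix (Fin m) (Fin n) ℝ) (hn : 0 < n)
    (hrank : A.rank = n) :
    ∀ z : Fin n → ℝ, euclNorm z ≤ invNorm A * euclNorm (A.mulVec z) := by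
  have hne : {M : ℝ | ∀ z : Fin n → ℝ, euclNorm z ≤ M * euclNorm (A.mulVec z)}.Nonempty := by
    obtain ⟨M, _, hM⟩ := exists_bound A hrank
    exact ⟨M, hM⟩
  have hbdd : BddBelow {M : ℝ | ∀ z : Fin n → ℝ, euclNorm z ≤ M * euclNorm (A.mulVec z)} :=
    ⟨0, fun M hM => (invNorm_lower A hn hrank hM).le⟩
  have hclosed : IsClosed {M : ℝ | ∀ z : Fin n → ℝ, euclNorm z ≤ M * euclNorm (A.mulVec z)} := by
    have : {M : ℝ | ∀ z : Fin n → ℝ, euclNorm z ≤ M * euclNorm (A.mulVec z)} =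
        ⋂ z : Fin n → ℝ, {M : ℝ | euclNorm z ≤ M * euclNorm (A.mulVec z)} := by
      ext M; simp [Set.mem_iInter]
    rw [this]
    exact isClosed_iInter fun z =>
      isClosed_le continuous_const (continuous_id.mul continuous_const)
  exact hclosed.csInf_mem hne hbdd

lemma invNorm_nonneg {m n : ℕ} (A : Matrix (Fin m) (Fin n) ℝ) (hn : 0 < n)
    (hrank : A.rank = n) : 0 ≤ invNorm A := by
  obtain ⟨M, _, hM⟩ := exists_bound A hrank
  exact Real.sInf_nonneg fun M hM => (invNorm_lower A hn hrank hM).le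

lemma euclNorm_mulVec_le {m n : ℕ} (A : Matrix (Fin m) (Fin n) ℝ) (z : Fin n → ℝ) :
    euclNorm (A.mulVec z) ≤ frob A * euclNorm z := by
  have hsq : euclNorm (A.mulVec z) ^ 2 ≤ (frob A * euclNorm z) ^ 2 := by
    rw [euclNorm_mulVec_sq, mul_pow, frob_sq, Finset.sum_mul]
    exact Finset.sum_le_sum fun i _ => ip_cs (A i) z
  have h1 := euclNorm_nonneg (A.mulVec z)
  have h2 : 0 ≤ frob A * euclNorm z := mul_nonneg (Real.sqrt_nonneg _) (euclNorm_nonneg z)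
  nlinarith

lemma one_le_R {m n : ℕ} (A : Matrix (Fin m) (Fin n) ℝ) (hn : 0 < n)
    (hrank : A.rank = n) : 1 ≤ invNorm A ^ 2 * frob A ^ 2 := by
  set z : Fin n → ℝ := Pi.single ⟨0, hn⟩ 1 with hz
  have h1 : (1:ℝ) ≤ invNorm A * euclNorm (A.mulVec z) := by
    have := invNorm_spec A hn hrank z; rwa [euclNorm_single] at this
  have h2 : euclNorm (A.mulVec z) ≤ frob A * 1 := by
    have := euclNorm_mulVec_le A z; rwa [euclNorm_single] at this
  have h3 := invNorm_nonneg A hn hrank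
  have h4 := euclNorm_nonneg (A.mulVec z)
  have h5 : (1:ℝ) ≤ invNorm A * frob A := by nlinarith
  nlinarith [h5]

lemma ip_sub {k : ℕ} (v z x : Fin k → ℝ) : ip v (z - x) = ip v z - ip v x := by
  simp [ip, mul_sub, Finset.sum_sub_distrib]

lemma step_sq {n : ℕ} (w z x : Fin n → ℝ) (ρ : ℝ) (hw : 0 < euclNorm w ^ 2) :
    euclNorm (z + ((ip w x + ρ - ip w z) / euclNorm w ^ 2) • w - x) ^ 2
      = euclNorm (z - x) ^ 2 + (ρ ^ 2 - ip w (z - x) ^ 2) / euclNorm w ^ 2 := by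
  have h1 : z + ((ip w x + ρ - ip w z) / euclNorm w ^ 2) • w - x
      = (z - x) + ((ip w x + ρ - ip w z) / euclNorm w ^ 2) • w := by
    abel
  rw [h1, expand_sq]
  have hs : ip w x + ρ - ip w z = ρ - ip w (z - x) := by
    rw [ip_sub]; ring
  rw [hs]
  have hW : euclNorm w ^ 2 ≠ 0 := ne_of_gt hw
  field_simp
  ring

lemma kz_sum_cons {m k : ℕ} (F : (Fin (k+1) → Fin m) → ℝ) :
    ∑ f : Fin (k+1) → Fin m, F f = ∑ i : Fin m, ∑ g : Fin k → Fin m, F (Fin.cons i g) := by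
  have h := Fintype.sum_equiv (Fin.consEquiv (fun _ => Fin m))
    (fun p : Fin m × (Fin k → Fin m) => F (Fin.cons p.1 p.2)) F (fun p => rfl)
  rw [← h, Fintype.sum_prod_type]



set_option maxHeartbeats 2000000 in
/-- Noisy randomized Kaczmarz: expected error after `k` steps. The expectation is the
sum over all index sequences of length `k`, each weighted by `∏ ‖a_{i_j}‖²/‖A‖_F²`. -/
theorem stmt_8 (m n : ℕ) (A : Matrix (Fin m) (Fin n) ℝ) (hrank : A.rank = n)
    (hrows : ∀ i, A i ≠ 0) (x x0 : Fin n → ℝ) (b r : Fin m → ℝ)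
    (hb : ∀ i, ip (A i) x = b i) (k : ℕ) :
    ∑ f : Fin k → Fin m, (∏ j, euclNorm (A (f j)) ^ 2 / frob A ^ 2) *
        euclNorm (kIter A (fun i => b i + r i) x0 (List.ofFn f) - x) ≤
      Real.sqrt ((1 - 1 / (invNorm A ^ 2 * frob A ^ 2)) ^ k) * euclNorm (x0 - x) +
        Real.sqrt (invNorm A ^ 2 * frob A ^ 2) * (⨆ i, |r i| / euclNorm (A i)) := by
  have hγ0 : 0 ≤ ⨆ i, |r i| / euclNorm (A i) :=
    Real.iSup_nonneg fun i => div_nonneg (abs_nonneg _) (euclNorm_nonneg _)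
  rcases Nat.eq_zero_or_pos n with hn0 | hn
  · -- degenerate case n = 0
    subst hn0
    have hz : ∀ v : Fin 0 → ℝ, euclNorm v = 0 := fun v => by simp [euclNorm]
    have hL : ∑ f : Fin k → Fin m, (∏ j, euclNorm (A (f j)) ^ 2 / frob A ^ 2) *
        euclNorm (kIter A (fun i => b i + r i) x0 (List.ofFn f) - x) = 0 := by
      apply Finset.sum_eq_zero; intro f _; rw [hz]; ring
    rw [hL]
    have h1 : 0 ≤ Real.sqrt ((1 - 1 / (invNorm A ^ 2 * frob A ^ 2)) ^ k) * euclNorm (x0 - x) :=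
      mul_nonneg (Real.sqrt_nonneg _) (euclNorm_nonneg _)
    have h2 : 0 ≤ Real.sqrt (invNorm A ^ 2 * frob A ^ 2) * (⨆ i, |r i| / euclNorm (A i)) :=
      mul_nonneg (Real.sqrt_nonneg _) hγ0
    linarith
  -- main case
  have hm : 0 < m := by
    have := Matrix.rank_le_height A
    omega
  have hW : ∀ i, 0 < euclNorm (A i) ^ 2 := fun i => euclNorm_sq_pos (hrows i)
  have hF2 : 0 < frob A ^ 2 := by
    rw [frob_sq]
    exact Finset.sum_pos (fun i _ => hW i) ⟨⟨0, hm⟩, Finset.mem_univ _⟩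
  set R := invNorm A ^ 2 * frob A ^ 2 with hR
  have hR1 : 1 ≤ R := one_le_R A hn hrank
  have hR0 : 0 < R := lt_of_lt_of_le one_pos hR1
  have hRinv : 0 ≤ 1 - 1 / R := by
    have : 1 / R ≤ 1 := by
      rw [div_le_one hR0]; exact hR1
    linarith
  set γ := ⨆ i, |r i| / euclNorm (A i) with hγ
  have hγle : ∀ i, |r i| / euclNorm (A i) ≤ γ := by
    intro i
    rw [hγ]
    exact le_ciSup (f := fun i => |r i| / euclNorm (A i)) (Set.Finite.bddAbove (Set.finite_range _)) i
  have henp : ∀ i, 0 < euclNorm (A i) := fun i => by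
    have := hW i; have := euclNorm_nonneg (A i); nlinarith
  have hrsq : ∀ i, r i ^ 2 ≤ γ ^ 2 * euclNorm (A i) ^ 2 := by
    intro i
    have h1 : |r i| ≤ γ * euclNorm (A i) := by
      rw [← div_le_iff₀ (henp i)] at *; exact hγle i
    have h2 : |r i| ^ 2 = r i ^ 2 := sq_abs _
    nlinarith [abs_nonneg (r i)]
  have hw1 : ∑ i, euclNorm (A i) ^ 2 / frob A ^ 2 = 1 := by
    rw [← Finset.sum_div, ← frob_sq, div_self hF2.ne']
  -- one-step expectation bound
  have hstep : ∀ z : Fin n → ℝ,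
      ∑ i, (euclNorm (A i) ^ 2 / frob A ^ 2) *
          euclNorm (z + ((b i + r i - ip (A i) z) / euclNorm (A i) ^ 2) • A i - x) ^ 2 ≤
        (1 - 1 / R) * euclNorm (z - x) ^ 2 + γ ^ 2 := by
    intro z
    have hpt : ∀ i, euclNorm (z + ((b i + r i - ip (A i) z) / euclNorm (A i) ^ 2) • A i - x) ^ 2
        = euclNorm (z - x) ^ 2 + (r i ^ 2 - ip (A i) (z - x) ^ 2) / euclNorm (A i) ^ 2 := by
      intro i
      have h := step_sq (A i) z x (r i) (hW i)
      rw [hb i] at h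
      exact h
    have hre : ∑ i, (euclNorm (A i) ^ 2 / frob A ^ 2) *
          euclNorm (z + ((b i + r i - ip (A i) z) / euclNorm (A i) ^ 2) • A i - x) ^ 2
        = euclNorm (z - x) ^ 2 +
          ((∑ i, r i ^ 2) - euclNorm (A.mulVec (z - x)) ^ 2) / frob A ^ 2 := by
      rw [euclNorm_mulVec_sq]
      have : ∀ i ∈ Finset.univ, (euclNorm (A i) ^ 2 / frob A ^ 2) *
          euclNorm (z + ((b i + r i - ip (A i) z) / euclNorm (A i) ^ 2) • A i - x) ^ 2
          = (euclNorm (A i) ^ 2 / frob A ^ 2) * euclNorm (z - x) ^ 2 +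
            (r i ^ 2 - ip (A i) (z - x) ^ 2) / frob A ^ 2 := by
        intro i _
        rw [hpt i]
        have h1 := (hW i).ne'
        have h2 := hF2.ne'
        rw [mul_add, div_mul_div_comm, mul_comm (frob A ^ 2), mul_div_mul_left _ _ h1]
      rw [Finset.sum_congr rfl this, Finset.sum_add_distrib, ← Finset.sum_mul, hw1,
        one_mul, ← Finset.sum_div, Finset.sum_sub_distrib]
    rw [hre]
    have hAe : euclNorm (z - x) ^ 2 / R ≤ euclNorm (A.mulVec (z - x)) ^ 2 / frob A ^ 2 := by
      have h1 := invNorm_spec A hn hrank (z - x)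
      have h2 : euclNorm (z - x) ^ 2 ≤ invNorm A ^ 2 * euclNorm (A.mulVec (z - x)) ^ 2 := by
        nlinarith [euclNorm_nonneg (z - x), euclNorm_nonneg (A.mulVec (z - x)),
          invNorm_nonneg A hn hrank]
      have hiN2 : 0 < invNorm A ^ 2 := by
        have : R / frob A ^ 2 = invNorm A ^ 2 := by rw [hR, mul_div_assoc, div_self hF2.ne', mul_one]
        rw [← this]; positivity
      rw [hR, div_le_div_iff₀ (by positivity) hF2]
      nlinarith
    have hrs : (∑ i, r i ^ 2) / frob A ^ 2 ≤ γ ^ 2 := by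
      rw [div_le_iff₀ hF2]
      calc ∑ i, r i ^ 2 ≤ ∑ i, γ ^ 2 * euclNorm (A i) ^ 2 :=
            Finset.sum_le_sum fun i _ => hrsq i
        _ = γ ^ 2 * frob A ^ 2 := by rw [← Finset.mul_sum, frob_sq]
    have hring : (1 - 1 / R) * euclNorm (z - x) ^ 2
        = euclNorm (z - x) ^ 2 - euclNorm (z - x) ^ 2 / R := by ring
    rw [sub_div]
    rw [hring]
    have h3 : (∑ i, r i ^ 2) / frob A ^ 2 - euclNorm (A.mulVec (z - x)) ^ 2 / frob A ^ 2
        ≤ γ ^ 2 - euclNorm (z - x) ^ 2 / R := by linarith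
    linarith
  -- normalization of weights
  have hwnn : ∀ i, 0 ≤ euclNorm (A i) ^ 2 / frob A ^ 2 := fun i => by positivity
  have hPnn : ∀ {j : ℕ} (f : Fin j → Fin m), 0 ≤ ∏ l, euclNorm (A (f l)) ^ 2 / frob A ^ 2 :=
    fun f => Finset.prod_nonneg fun l _ => hwnn _
  have hsum1 : ∀ j : ℕ, ∑ f : Fin j → Fin m, ∏ l, euclNorm (A (f l)) ^ 2 / frob A ^ 2 = 1 := by
    intro j
    induction j with
    | zero =>
      rw [Fintype.sum_subsingleton _ (fun i : Fin 0 => i.elim0)]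
      simp
    | succ j ih =>
      rw [kz_sum_cons]
      have : ∀ i : Fin m, ∑ g : Fin j → Fin m,
          ∏ l, euclNorm (A (Fin.cons (α := fun _ => Fin m) i g l)) ^ 2 / frob A ^ 2
          = (euclNorm (A i) ^ 2 / frob A ^ 2) *
            ∑ g : Fin j → Fin m, ∏ l, euclNorm (A (g l)) ^ 2 / frob A ^ 2 := by
        intro i
        rw [Finset.mul_sum]
        apply Finset.sum_congr rfl; intro g _
        rw [Fin.prod_univ_succ]
        simp [Fin.cons_zero, Fin.cons_succ]
      rw [Finset.sum_congr rfl fun i _ => this i]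
      rw [← Finset.sum_mul, hw1, one_mul]
      exact ih
  -- second moment bound by induction
  have hE2 : ∀ j : ℕ, ∑ f : Fin j → Fin m, (∏ l, euclNorm (A (f l)) ^ 2 / frob A ^ 2) *
      euclNorm (kIter A (fun i => b i + r i) x0 (List.ofFn f) - x) ^ 2 ≤
      (1 - 1 / R) ^ j * euclNorm (x0 - x) ^ 2 + R * γ ^ 2 := by
    intro j
    induction j with
    | zero =>
      rw [Fintype.sum_subsingleton _ (fun i : Fin 0 => i.elim0)]
      have h1 : List.ofFn (fun i : Fin 0 => i.elim0 (α := Fin m)) = [] := by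
        simp
      rw [h1]
      have h2 : (∏ l : Fin 0, euclNorm (A ((fun i : Fin 0 => i.elim0 (α := Fin m)) l)) ^ 2
          / frob A ^ 2) = 1 := by simp
      rw [h2, one_mul, pow_zero, one_mul, kIter]
      nlinarith [sq_nonneg γ]
    | succ j ih =>
      rw [kz_sum_cons]
      have hsplit : ∀ (i : Fin m) (g : Fin j → Fin m),
          (∏ l, euclNorm (A (Fin.cons (α := fun _ => Fin m) i g l)) ^ 2 / frob A ^ 2) *
            euclNorm (kIter A (fun i' => b i' + r i') x0 (List.ofFn (Fin.cons (α := fun _ => Fin m) i g)) - x) ^ 2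
          = (euclNorm (A i) ^ 2 / frob A ^ 2) *
              ((∏ l, euclNorm (A (g l)) ^ 2 / frob A ^ 2) *
              euclNorm (kIter A (fun i' => b i' + r i') x0 (List.ofFn g) +
                ((b i + r i - ip (A i) (kIter A (fun i' => b i' + r i') x0 (List.ofFn g)))
                  / euclNorm (A i) ^ 2) • A i - x) ^ 2) := by
        intro i g
        have hofn : List.ofFn (Fin.cons (α := fun _ => Fin m) i g) = i :: List.ofFn g := by
          rw [List.ofFn_succ]
          simp [Fin.cons_zero, Fin.cons_succ]
        rw [hofn]
        have hk : kIter A (fun i' => b i' + r i') x0 (i :: List.ofFn g)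
            = kIter A (fun i' => b i' + r i') x0 (List.ofFn g) +
              ((b i + r i - ip (A i) (kIter A (fun i' => b i' + r i') x0 (List.ofFn g)))
                / euclNorm (A i) ^ 2) • A i := by
          rw [kIter]
        rw [hk, Fin.prod_univ_succ]
        simp only [Fin.cons_zero, Fin.cons_succ]
        ring
      rw [Finset.sum_congr rfl fun i _ => Finset.sum_congr rfl fun g _ => hsplit i g]
      rw [Finset.sum_comm]
      have hinner : ∀ g : Fin j → Fin m,
          ∑ i, (euclNorm (A i) ^ 2 / frob A ^ 2) *
            ((∏ l, euclNorm (A (g l)) ^ 2 / frob A ^ 2) *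
            euclNorm (kIter A (fun i' => b i' + r i') x0 (List.ofFn g) +
              ((b i + r i - ip (A i) (kIter A (fun i' => b i' + r i') x0 (List.ofFn g)))
                / euclNorm (A i) ^ 2) • A i - x) ^ 2)
          ≤ (∏ l, euclNorm (A (g l)) ^ 2 / frob A ^ 2) *
            ((1 - 1 / R) * euclNorm (kIter A (fun i' => b i' + r i') x0 (List.ofFn g) - x) ^ 2
              + γ ^ 2) := by
        intro g
        have h1 : ∑ i, (euclNorm (A i) ^ 2 / frob A ^ 2) *
            ((∏ l, euclNorm (A (g l)) ^ 2 / frob A ^ 2) *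
            euclNorm (kIter A (fun i' => b i' + r i') x0 (List.ofFn g) +
              ((b i + r i - ip (A i) (kIter A (fun i' => b i' + r i') x0 (List.ofFn g)))
                / euclNorm (A i) ^ 2) • A i - x) ^ 2)
            = (∏ l, euclNorm (A (g l)) ^ 2 / frob A ^ 2) *
              ∑ i, (euclNorm (A i) ^ 2 / frob A ^ 2) *
              euclNorm (kIter A (fun i' => b i' + r i') x0 (List.ofFn g) +
                ((b i + r i - ip (A i) (kIter A (fun i' => b i' + r i') x0 (List.ofFn g)))
                  / euclNorm (A i) ^ 2) • A i - x) ^ 2 := by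
          rw [Finset.mul_sum]
          apply Finset.sum_congr rfl; intro i _; ring
        rw [h1]
        exact mul_le_mul_of_nonneg_left (hstep _) (hPnn g)
      calc ∑ g : Fin j → Fin m, ∑ i, (euclNorm (A i) ^ 2 / frob A ^ 2) *
            ((∏ l, euclNorm (A (g l)) ^ 2 / frob A ^ 2) *
            euclNorm (kIter A (fun i' => b i' + r i') x0 (List.ofFn g) +
              ((b i + r i - ip (A i) (kIter A (fun i' => b i' + r i') x0 (List.ofFn g)))
                / euclNorm (A i) ^ 2) • A i - x) ^ 2)
          ≤ ∑ g : Fin j → Fin m, (∏ l, euclNorm (A (g l)) ^ 2 / frob A ^ 2) *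
            ((1 - 1 / R) * euclNorm (kIter A (fun i' => b i' + r i') x0 (List.ofFn g) - x) ^ 2
              + γ ^ 2) := Finset.sum_le_sum fun g _ => hinner g
        _ = (1 - 1 / R) * (∑ g : Fin j → Fin m, (∏ l, euclNorm (A (g l)) ^ 2 / frob A ^ 2) *
              euclNorm (kIter A (fun i' => b i' + r i') x0 (List.ofFn g) - x) ^ 2)
            + γ ^ 2 * ∑ g : Fin j → Fin m, (∏ l, euclNorm (A (g l)) ^ 2 / frob A ^ 2) := by
          rw [Finset.mul_sum, Finset.mul_sum, ← Finset.sum_add_distrib]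
          apply Finset.sum_congr rfl; intro g _; ring
        _ ≤ (1 - 1 / R) * ((1 - 1 / R) ^ j * euclNorm (x0 - x) ^ 2 + R * γ ^ 2) + γ ^ 2 * 1 := by
          have := mul_le_mul_of_nonneg_left ih hRinv
          rw [hsum1 j]
          linarith
        _ ≤ (1 - 1 / R) ^ (j + 1) * euclNorm (x0 - x) ^ 2 + R * γ ^ 2 := by
          have hRne : R ≠ 0 := hR0.ne'
          have hexp : (1 - 1 / R) * R * γ ^ 2 = R * γ ^ 2 - γ ^ 2 := by
            field_simp
          have : (1 - 1 / R) ^ (j + 1) = (1 - 1 / R) * (1 - 1 / R) ^ j := by ring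
          rw [this]
          nlinarith [sq_nonneg γ]
  -- Jensen step: first moment ≤ sqrt of second moment
  set S1 := ∑ f : Fin k → Fin m, (∏ j, euclNorm (A (f j)) ^ 2 / frob A ^ 2) *
      euclNorm (kIter A (fun i => b i + r i) x0 (List.ofFn f) - x) with hS1
  set S2 := ∑ f : Fin k → Fin m, (∏ j, euclNorm (A (f j)) ^ 2 / frob A ^ 2) *
      euclNorm (kIter A (fun i => b i + r i) x0 (List.ofFn f) - x) ^ 2 with hS2
  have hS1nn : 0 ≤ S1 := Finset.sum_nonneg fun f _ =>
    mul_nonneg (hPnn f) (euclNorm_nonneg _)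
  have hjensen : S1 ^ 2 ≤ S2 := by
    have hcs := Finset.sum_mul_sq_le_sq_mul_sq Finset.univ
      (fun f : Fin k → Fin m => Real.sqrt (∏ j, euclNorm (A (f j)) ^ 2 / frob A ^ 2))
      (fun f : Fin k → Fin m => Real.sqrt (∏ j, euclNorm (A (f j)) ^ 2 / frob A ^ 2) *
        euclNorm (kIter A (fun i => b i + r i) x0 (List.ofFn f) - x))
    have he1 : ∀ f : Fin k → Fin m,
        Real.sqrt (∏ j, euclNorm (A (f j)) ^ 2 / frob A ^ 2) *
          (Real.sqrt (∏ j, euclNorm (A (f j)) ^ 2 / frob A ^ 2) *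
            euclNorm (kIter A (fun i => b i + r i) x0 (List.ofFn f) - x))
        = (∏ j, euclNorm (A (f j)) ^ 2 / frob A ^ 2) *
          euclNorm (kIter A (fun i => b i + r i) x0 (List.ofFn f) - x) := by
      intro f
      rw [← mul_assoc, Real.mul_self_sqrt (hPnn f)]
    have he2 : ∀ f : Fin k → Fin m,
        Real.sqrt (∏ j, euclNorm (A (f j)) ^ 2 / frob A ^ 2) ^ 2
        = ∏ j, euclNorm (A (f j)) ^ 2 / frob A ^ 2 := fun f => Real.sq_sqrt (hPnn f)
    have he3 : ∀ f : Fin k → Fin m,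
        (Real.sqrt (∏ j, euclNorm (A (f j)) ^ 2 / frob A ^ 2) *
          euclNorm (kIter A (fun i => b i + r i) x0 (List.ofFn f) - x)) ^ 2
        = (∏ j, euclNorm (A (f j)) ^ 2 / frob A ^ 2) *
          euclNorm (kIter A (fun i => b i + r i) x0 (List.ofFn f) - x) ^ 2 := by
      intro f
      rw [mul_pow, he2 f]
    rw [Finset.sum_congr rfl fun f _ => he1 f,
      Finset.sum_congr rfl fun f _ => he2 f,
      Finset.sum_congr rfl fun f _ => he3 f, hsum1 k, one_mul] at hcs
    exact hcs
  have hfin : S1 ≤ Real.sqrt ((1 - 1 / R) ^ k * euclNorm (x0 - x) ^ 2 + R * γ ^ 2) := by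
    have h1 : S1 ≤ Real.sqrt S2 := by
      rw [show S1 = Real.sqrt (S1 ^ 2) from (Real.sqrt_sq hS1nn).symm]
      exact Real.sqrt_le_sqrt hjensen
    exact h1.trans (Real.sqrt_le_sqrt (hE2 k))
  -- split the square root
  have hsplit2 : Real.sqrt ((1 - 1 / R) ^ k * euclNorm (x0 - x) ^ 2 + R * γ ^ 2)
      ≤ Real.sqrt ((1 - 1 / R) ^ k) * euclNorm (x0 - x) + Real.sqrt R * γ := by
    have ha : (0:ℝ) ≤ (1 - 1 / R) ^ k * euclNorm (x0 - x) ^ 2 :=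
      mul_nonneg (pow_nonneg hRinv k) (sq_nonneg _)
    have hbnn : (0:ℝ) ≤ R * γ ^ 2 := mul_nonneg hR0.le (sq_nonneg _)
    have h1 : Real.sqrt ((1 - 1 / R) ^ k * euclNorm (x0 - x) ^ 2 + R * γ ^ 2)
        ≤ Real.sqrt ((1 - 1 / R) ^ k * euclNorm (x0 - x) ^ 2) + Real.sqrt (R * γ ^ 2) := by
      have h2 : (1 - 1 / R) ^ k * euclNorm (x0 - x) ^ 2 + R * γ ^ 2
          ≤ (Real.sqrt ((1 - 1 / R) ^ k * euclNorm (x0 - x) ^ 2) + Real.sqrt (R * γ ^ 2)) ^ 2 := by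
        have e1 := Real.sq_sqrt ha
        have e2 := Real.sq_sqrt hbnn
        nlinarith [Real.sqrt_nonneg ((1 - 1 / R) ^ k * euclNorm (x0 - x) ^ 2),
          Real.sqrt_nonneg (R * γ ^ 2),
          mul_nonneg (Real.sqrt_nonneg ((1 - 1 / R) ^ k * euclNorm (x0 - x) ^ 2))
            (Real.sqrt_nonneg (R * γ ^ 2))]
      calc Real.sqrt ((1 - 1 / R) ^ k * euclNorm (x0 - x) ^ 2 + R * γ ^ 2)
          ≤ Real.sqrt ((Real.sqrt ((1 - 1 / R) ^ k * euclNorm (x0 - x) ^ 2)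
              + Real.sqrt (R * γ ^ 2)) ^ 2) := Real.sqrt_le_sqrt h2
        _ = _ := Real.sqrt_sq (by positivity)
    have h3 : Real.sqrt ((1 - 1 / R) ^ k * euclNorm (x0 - x) ^ 2)
        = Real.sqrt ((1 - 1 / R) ^ k) * euclNorm (x0 - x) := by
      rw [Real.sqrt_mul (pow_nonneg hRinv k), Real.sqrt_sq (euclNorm_nonneg _)]
    have h4 : Real.sqrt (R * γ ^ 2) = Real.sqrt R * γ := by
      rw [Real.sqrt_mul hR0.le, Real.sqrt_sq hγ0]
    rw [h3, h4] at h1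
    exact h1
  exact hfin.trans hsplit2
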